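/- Let μ > 0 and ε ≥ 0. Let p(t) = (1/√(2π)) exp(−(t − μ)^2/2) and q(t) = (1/√(2π)) exp(−t^2/2) be the densities of the Gaussian distributions N(μ, 1) and N(0, 1), and let Φ be the standard normal cumulative distribution function. Then the hockey-stick divergence of order e^ε from N(μ,1) to N(0,1) satisfies ∫_ℝ [p(t) − e^ε q(t)]_+ dt = Φ(−ε/μ + μ/2) − e^ε Φ(−ε/μ − μ/2). -/

import Mathlib

open MeasureTheory

/-- The standard normal cumulative distribution function. -/
noncomputable def stdNormalCDF (x : ℝ) : ℝ :=
  ∫ s in Set.Iic x, (1 / Real.sqrt (2 * Real.pi)) * Real.exp (-s ^ 2 / 2)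

lemma tail_integral (m a : ℝ) :
    ∫ t in Set.Ici a, (1 / Real.sqrt (2 * Real.pi)) * Real.exp (-(t - m) ^ 2 / 2) =
      stdNormalCDF (m - a) := by
  have hmp : MeasurePreserving (fun t : ℝ => m - t) volume volume :=
    Measure.measurePreserving_sub_left volume m
  have hemb : MeasurableEmbedding (fun t : ℝ => m - t) :=
    (MeasurableEquiv.subLeft m).measurableEmbedding
  have hpre : (fun t : ℝ => m - t) ⁻¹' Set.Iic (m - a) = Set.Ici a := by
    ext t
    simp only [Set.mem_preimage, Set.mem_Iic, Set.mem_Ici, sub_le_sub_iff_left]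
  have h := hmp.setIntegral_preimage_emb hemb
    (fun s => (1 / Real.sqrt (2 * Real.pi)) * Real.exp (-s ^ 2 / 2)) (Set.Iic (m - a))
  rw [hpre] at h
  rw [stdNormalCDF, ← h]
  apply setIntegral_congr_fun measurableSet_Ici
  intro t _
  simp only
  congr 1
  ring_nf

lemma gauss_integrable (m : ℝ) :
    Integrable (fun t : ℝ => (1 / Real.sqrt (2 * Real.pi)) * Real.exp (-(t - m) ^ 2 / 2)) := by
  have h : Integrable (fun t : ℝ => Real.exp (-(1/2 : ℝ) * t ^ 2)) :=
    integrable_exp_neg_mul_sq (by norm_num)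
  have h2 := (h.comp_sub_right m).const_mul (1 / Real.sqrt (2 * Real.pi))
  convert h2 using 2 with t
  congr 1
  ring

/-- The hockey-stick divergence of order `e^ε` from `N(μ, 1)` to `N(0, 1)` equals
`Φ(-ε/μ + μ/2) - e^ε Φ(-ε/μ - μ/2)`. -/
theorem stmt_8 (μ ε : ℝ) (hμ : 0 < μ) (hε : 0 ≤ ε) :
    (∫ t : ℝ, max 0 ((1 / Real.sqrt (2 * Real.pi)) * Real.exp (-(t - μ) ^ 2 / 2) -
        Real.exp ε * ((1 / Real.sqrt (2 * Real.pi)) * Real.exp (-t ^ 2 / 2)))) =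
      stdNormalCDF (-ε / μ + μ / 2) - Real.exp ε * stdNormalCDF (-ε / μ - μ / 2) := by
  set c : ℝ := ε / μ + μ / 2 with hc
  set C : ℝ := 1 / Real.sqrt (2 * Real.pi) with hC
  have hCpos : 0 < C := by
    rw [hC]
    positivity
  set f : ℝ → ℝ := fun t => C * Real.exp (-(t - μ) ^ 2 / 2) - Real.exp ε * (C * Real.exp (-t ^ 2 / 2)) with hf
  have hsign : ∀ t : ℝ, (0 ≤ f t ↔ c ≤ t) := by
    intro t
    rw [hf]
    simp only
    rw [sub_nonneg, mul_comm (Real.exp ε), mul_assoc, ← Real.exp_add,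
      mul_le_mul_iff_right₀ hCpos, Real.exp_le_exp]
    constructor
    · intro h
      rw [hc]
      rw [div_add_div _ _ (ne_of_gt hμ) (by norm_num : (2:ℝ) ≠ 0), div_le_iff₀ (by positivity)]
      nlinarith
    · intro h
      have : ε ≤ t * μ - μ ^ 2 / 2 := by
        rw [hc] at h
        have := mul_le_mul_of_nonneg_right h (le_of_lt hμ)
        have h2 : (ε / μ + μ / 2) * μ = ε + μ ^ 2 / 2 := by
          field_simp
        nlinarith
      nlinarith
  have hind : (fun t : ℝ => max 0 (f t)) = (Set.Ici c).indicator f := by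
    funext t
    by_cases ht : c ≤ t
    · rw [Set.indicator_apply, if_pos (Set.mem_Ici.2 ht), max_eq_right ((hsign t).2 ht)]
    · rw [Set.indicator_apply, if_neg (fun h => ht (Set.mem_Ici.1 h)), max_eq_left]
      by_contra h
      push_neg at h
      exact ht ((hsign t).1 (le_of_lt h))
  have hint : (∫ t : ℝ, max 0 (f t)) = ∫ t in Set.Ici c, f t := by
    rw [hind, integral_indicator measurableSet_Ici]
  rw [show (∫ t : ℝ, max 0 (C * Real.exp (-(t - μ) ^ 2 / 2) -
      Real.exp ε * (C * Real.exp (-t ^ 2 / 2)))) = ∫ t : ℝ, max 0 (f t) from rfl, hint]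
  have hi1 : IntegrableOn (fun t : ℝ => C * Real.exp (-(t - μ) ^ 2 / 2)) (Set.Ici c) :=
    (gauss_integrable μ).integrableOn
  have hi0 : IntegrableOn (fun t : ℝ => C * Real.exp (-t ^ 2 / 2)) (Set.Ici c) := by
    have h := (gauss_integrable 0).integrableOn (s := Set.Ici c)
    simp only [sub_zero] at h
    exact h
  rw [integral_sub hi1 (hi0.const_mul _), integral_const_mul (Real.exp ε)]
  have e1 : (∫ t in Set.Ici c, C * Real.exp (-(t - μ) ^ 2 / 2)) = stdNormalCDF (μ - c) :=
    tail_integral μ c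
  have e0 : (∫ t in Set.Ici c, C * Real.exp (-t ^ 2 / 2)) = stdNormalCDF (0 - c) := by
    rw [← tail_integral 0 c]
    apply setIntegral_congr_fun measurableSet_Ici
    intro t _
    simp only [sub_zero, hC]
  rw [e1, e0]
  have a1 : μ - c = -ε / μ + μ / 2 := by rw [hc]; field_simp; ring
  have a0 : (0 : ℝ) - c = -ε / μ - μ / 2 := by rw [hc]; field_simp; ring
  rw [a1, a0]
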